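/- For a single-system pure state |ψ⟩ and a complete projective measurement Π in orthonormal basis {|i⟩}, the trace distance ½‖|ψ⟩⟨ψ| − Π[|ψ⟩⟨ψ|]‖₁ equals the unique nonnegative c satisfying Σᵢ pᵢ/(c + pᵢ) = 1, where pᵢ = |⟨i|ψ⟩|². -/

import Mathlib

open Matrix Kronecker BigOperators
open scoped ComplexOrder

/-- Trace norm (Schatten 1-norm): `Tr √(XᴴX)`. -/
noncomputable def traceNorm {m n : Type*} [Fintype m] [Fintype n] [DecidableEq n]
    (X : Matrix m n ℂ) : ℝ :=
  (((Matrix.posSemidef_conjTranspose_mul_self X).1.eigenvectorUnitary.1 *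
    diagonal (((↑) : ℝ → ℂ) ∘ (√·) ∘ (Matrix.posSemidef_conjTranspose_mul_self X).1.eigenvalues) *
    (star (Matrix.posSemidef_conjTranspose_mul_self X).1.eigenvectorUnitary : Matrix n n ℂ)).trace).re


/-- Complete projective measurement in the orthonormal basis `e`:
`Π[τ] = Σᵢ |eᵢ⟩⟨eᵢ| τ |eᵢ⟩⟨eᵢ|`. -/
noncomputable def projMeas {d : ℕ} (e : Fin d → Fin d → ℂ)
    (τ : Matrix (Fin d) (Fin d) ℂ) : Matrix (Fin d) (Fin d) ℂ :=
  ∑ i, Matrix.vecMulVec (e i) (star (e i)) * τ * Matrix.vecMulVec (e i) (star (e i))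


section auxiliaryDisturbance
open Matrix BigOperators Complex
variable {d : ℕ}

lemma aux_vmv_mul_vmv (u v w z : Fin d → ℂ) :
    vecMulVec u v * vecMulVec w z = (v ⬝ᵥ w) • vecMulVec u z := by
  ext i j
  simp only [mul_apply, vecMulVec_apply, Matrix.smul_apply, dotProduct, smul_eq_mul,
    Finset.sum_mul]
  exact Finset.sum_congr rfl fun k _ => by ring

lemma aux_mul_vmv (A : Matrix (Fin d) (Fin d) ℂ) (u v : Fin d → ℂ) :
    A * vecMulVec u v = vecMulVec (A *ᵥ u) v := by
  ext i j
  simp only [mul_apply, vecMulVec_apply, mulVec, dotProduct, Finset.sum_mul]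
  exact Finset.sum_congr rfl fun k _ => by ring

lemma aux_vmv_mul (A : Matrix (Fin d) (Fin d) ℂ) (u v : Fin d → ℂ) :
    vecMulVec u v * A = vecMulVec u (v ᵥ* A) := by
  ext i j
  simp only [mul_apply, vecMulVec_apply, vecMul, dotProduct, Finset.mul_sum]
  exact Finset.sum_congr rfl fun k _ => by ring

lemma aux_vmv_mulVec (u v x : Fin d → ℂ) :
    vecMulVec u v *ᵥ x = (v ⬝ᵥ x) • u := by
  ext i
  simp only [mulVec, vecMulVec_apply, dotProduct, Pi.smul_apply, smul_eq_mul,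
    Finset.sum_mul]
  exact Finset.sum_congr rfl fun k _ => by ring

lemma aux_vmv_sub (u x y : Fin d → ℂ) :
    vecMulVec u (x - y) = vecMulVec u x - vecMulVec u y := by
  ext i j; simp [vecMulVec_apply, mul_sub]

lemma aux_vmv_smul_right (u w : Fin d → ℂ) (t : ℂ) :
    vecMulVec u (t • w) = t • vecMulVec u w := by
  ext i j
  simp only [vecMulVec_apply, Pi.smul_apply, Matrix.smul_apply, smul_eq_mul]
  ring

lemma aux_vmv_herm (u : Fin d → ℂ) : (vecMulVec u (star u)).IsHermitian := by
  ext i j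
  simp only [conjTranspose_apply, vecMulVec_apply, Pi.star_apply, star_mul', star_star]
  ring

lemma aux_diag_herm (f : Fin d → ℝ) : (diagonal (fun i => (f i : ℂ))).IsHermitian := by
  rw [Matrix.IsHermitian, diagonal_conjTranspose,
    show (star fun i => ((f i : ℂ))) = fun i => ((f i : ℂ)) from
      funext fun i => Complex.conj_ofReal (f i)]

lemma aux_quad_vmv (u x : Fin d → ℂ) :
    star x ⬝ᵥ (vecMulVec u (star u) *ᵥ x) = ((‖star u ⬝ᵥ x‖ ^ 2 : ℝ) : ℂ) := by
  rw [aux_vmv_mulVec, dotProduct_smul, smul_eq_mul,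
    show star x ⬝ᵥ u = star (star u ⬝ᵥ x) from star_dotProduct x u]
  rw [Complex.star_def, Complex.mul_conj, Complex.normSq_eq_norm_sq]

lemma aux_quad_diag (f : Fin d → ℝ) (x : Fin d → ℂ) :
    star x ⬝ᵥ (diagonal (fun i => (f i : ℂ)) *ᵥ x) = ((∑ i, f i * ‖x i‖ ^ 2 : ℝ) : ℂ) := by
  push_cast
  simp only [dotProduct, mulVec_diagonal, Pi.star_apply]
  apply Finset.sum_congr rfl
  intro i _
  rw [Complex.star_def]
  rw [show (starRingEnd ℂ) (x i) * ((f i : ℂ) * x i) = (f i : ℂ) * (x i * (starRingEnd ℂ) (x i)) by ring,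
    Complex.mul_conj, Complex.normSq_eq_norm_sq]
  push_cast
  ring

open scoped MatrixOrder in
lemma aux_traceNorm_eq_of_decomp (M P N : Matrix (Fin d) (Fin d) ℂ)
    (hP : P.PosSemidef) (hN : N.PosSemidef) (hM : M = P - N)
    (hPN : P * N = 0) (hNP : N * P = 0) :
    traceNorm M = (P.trace + N.trace).re := by
  have hsq : (P + N) ^ 2 = Mᴴ * M := by
    subst hM
    rw [conjTranspose_sub, hP.1, hN.1, pow_two]
    rw [mul_add, add_mul, add_mul, mul_sub, sub_mul, sub_mul, hPN, hNP]
    abel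
  have hkey : CFC.sqrt (Mᴴ * M) = P + N :=
    CFC.sqrt_unique (by rw [← hsq, pow_two]) (hP.add hN).nonneg
  have hdef : traceNorm M = (CFC.sqrt (Mᴴ * M)).trace.re := by
    rw [traceNorm, CFC.sqrt_eq_cfc, cfc_nnreal_eq_real _ (Mᴴ * M)
      (Matrix.posSemidef_conjTranspose_mul_self M).nonneg,
      (Matrix.posSemidef_conjTranspose_mul_self M).1.cfc_eq]
    simp only [IsHermitian.cfc, Unitary.conjStarAlgAut_apply]
    congr 5
    funext i
    simp only [Function.comp_apply]
    simp [Real.coe_sqrt, Real.coe_toNNReal']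
    exact congrArg Real.sqrt (max_eq_left ((Matrix.posSemidef_conjTranspose_mul_self M).eigenvalues_nonneg i)).symm
  rw [hdef, hkey, trace_add, Complex.add_re]

lemma aux_key_ineq (p : Fin d → ℝ) (hp0 : ∀ i, 0 ≤ p i) (c : ℝ) (hcpos : 0 < c)
    (hc : ∑ i, p i / (c + p i) = 1) (a x : Fin d → ℂ) (ha : ∀ i, ‖a i‖ ^ 2 = p i) :
    ‖∑ i, (starRingEnd ℂ) (a i) * x i‖ ^ 2 ≤
      (c / (∑ i, p i / (c + p i) ^ 2)) * ‖∑ i, ((starRingEnd ℂ) (a i) / (c + p i)) * x i‖ ^ 2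
        + ∑ i, p i * ‖x i‖ ^ 2 := by
  have hden : ∀ i, 0 < c + p i := fun i => by have := hp0 i; linarith
  set q : Fin d → ℝ := fun i => p i / (c + p i) with hq
  have hq0 : ∀ i, 0 ≤ q i := fun i => div_nonneg (hp0 i) (hden i).le
  have hq1 : ∀ i, q i < 1 := fun i => by
    rw [hq]; rw [div_lt_one (hden i)]; linarith
  set Q2 : ℝ := ∑ i, q i ^ 2 with hQ2def
  set s : ℝ := ∑ i, p i / (c + p i) ^ 2 with hsdef
  have hex : ∃ i, 0 < q i := by
    by_contra h
    push_neg at h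
    have : ∀ i, q i = 0 := fun i => le_antisymm (h i) (hq0 i)
    have : (1:ℝ) = 0 := by rw [← hc]; simp [← hq, this]
    norm_num at this
  obtain ⟨i₀, hi₀⟩ := hex
  have hQ2pos : 0 < Q2 := by
    apply Finset.sum_pos' (fun i _ => sq_nonneg _) ⟨i₀, Finset.mem_univ _, by positivity⟩
  have hQ2lt : Q2 < 1 := by
    calc Q2 < ∑ i, q i := by
            apply Finset.sum_lt_sum
              (fun i _ => by nlinarith [mul_nonneg (hq0 i) (sub_nonneg.2 (hq1 i).le)])
              ⟨i₀, Finset.mem_univ _, by nlinarith [mul_pos hi₀ (sub_pos.2 (hq1 i₀))]⟩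
      _ = 1 := hc
  have hcs : c * s = 1 - Q2 := by
    rw [hsdef, Finset.mul_sum, ← hc, hQ2def, ← Finset.sum_sub_distrib]
    apply Finset.sum_congr rfl
    intro i _
    have h := (hden i).ne'
    rw [hq]
    field_simp
    ring
  have hspos : 0 < s := by
    have : 0 < 1 - Q2 := by linarith
    nlinarith
  set G : ℂ := ∑ i, ((starRingEnd ℂ) (a i) / (c + p i)) * x i with hGdef
  set T : ℂ := ∑ i, (q i : ℝ) * ((starRingEnd ℂ) (a i) * x i) with hTdef
  have hA : ∑ i, (starRingEnd ℂ) (a i) * x i = (c:ℂ) * G + T := by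
    rw [hGdef, hTdef, Finset.mul_sum, ← Finset.sum_add_distrib]
    apply Finset.sum_congr rfl
    intro i _
    have h : ((c:ℂ) + (p i : ℂ)) ≠ 0 := by
      rw [← Complex.ofReal_add]
      exact_mod_cast (hden i).ne'
    rw [hq]
    push_cast
    field_simp
  have hT : ‖T‖ ^ 2 ≤ Q2 * ∑ i, p i * ‖x i‖ ^ 2 := by
    have h1 : ‖T‖ ≤ ∑ i, q i * (‖a i‖ * ‖x i‖) := by
      refine (norm_sum_le _ _).trans ?_
      apply Finset.sum_le_sum
      intro i _
      rw [norm_mul, norm_mul, Complex.norm_real, Real.norm_eq_abs,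
        _root_.abs_of_nonneg (hq0 i), RCLike.norm_conj]
    have h2 : (∑ i, q i * (‖a i‖ * ‖x i‖)) ^ 2 ≤ Q2 * ∑ i, p i * ‖x i‖ ^ 2 := by
      have := Finset.sum_mul_sq_le_sq_mul_sq Finset.univ q (fun i => ‖a i‖ * ‖x i‖)
      calc (∑ i, q i * (‖a i‖ * ‖x i‖)) ^ 2
          ≤ (∑ i, q i ^ 2) * ∑ i, (‖a i‖ * ‖x i‖) ^ 2 := this
        _ = Q2 * ∑ i, p i * ‖x i‖ ^ 2 := by
            rw [hQ2def]
            congr 1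
            apply Finset.sum_congr rfl
            intro i _
            rw [mul_pow, ha i]
    have h0 : 0 ≤ ∑ i, q i * (‖a i‖ * ‖x i‖) :=
      Finset.sum_nonneg fun i _ => mul_nonneg (hq0 i) (by positivity)
    nlinarith [norm_nonneg T]
  set g : ℝ := ‖G‖ with hgdef
  set t : ℝ := ‖T‖ with htdef
  set P : ℝ := ∑ i, p i * ‖x i‖ ^ 2 with hPdef
  have hP0 : 0 ≤ P := Finset.sum_nonneg fun i _ => mul_nonneg (hp0 i) (sq_nonneg _)
  have hAbd : ‖∑ i, (starRingEnd ℂ) (a i) * x i‖ ≤ c * g + t := by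
    rw [hA]
    refine (norm_add_le _ _).trans ?_
    rw [norm_mul, Complex.norm_real, Real.norm_eq_abs, abs_of_pos hcpos]
  have hg0 : 0 ≤ g := norm_nonneg _
  have ht0 : 0 ≤ t := norm_nonneg _
  have h' : (1 - Q2) * (c * g + t) ^ 2 ≤ c ^ 2 * g ^ 2 + (1 - Q2) * P := by
    nlinarith [sq_nonneg (Q2 * (c * g) - (1 - Q2) * t), hT, hQ2pos, hQ2lt,
      mul_le_mul_of_nonneg_left hT (show (0:ℝ) ≤ 1 - Q2 by linarith),
      mul_nonneg (mul_nonneg hcpos.le hg0) ht0, hP0]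
  have h'' : (c * s) * (c * g + t) ^ 2 ≤ c ^ 2 * g ^ 2 + (c * s) * P := by
    rw [hcs]; exact h'
  have key : s * (c * g + t) ^ 2 ≤ c * g ^ 2 + s * P := by
    nlinarith [h'', hcpos]
  have hfin : (c * g + t) ^ 2 ≤ (c / s) * g ^ 2 + P := by
    have e1 : (c * g + t) ^ 2 = s * (c * g + t) ^ 2 / s := by field_simp
    rw [e1]
    calc s * (c * g + t) ^ 2 / s ≤ (c * g ^ 2 + s * P) / s :=
          (div_le_div_iff_of_pos_right hspos).mpr key
      _ = (c / s) * g ^ 2 + P := by field_simp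
  have hAn : 0 ≤ ‖∑ i, (starRingEnd ℂ) (a i) * x i‖ := norm_nonneg _
  nlinarith [hAbd, hfin, hAn]

lemma aux_N0_psd (p : Fin d → ℝ) (hp0 : ∀ i, 0 ≤ p i) (c : ℝ) (hcpos : 0 < c)
    (hc : ∑ i, p i / (c + p i) = 1) (a : Fin d → ℂ) (ha : ∀ i, ‖a i‖ ^ 2 = p i) :
    PosSemidef (((c / (∑ i, p i / (c + p i) ^ 2) : ℝ) : ℂ) •
        vecMulVec (fun i => a i / ((c : ℂ) + (p i : ℂ)))
          (star fun i => a i / ((c : ℂ) + (p i : ℂ)))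
      + (diagonal (fun i => (p i : ℂ)) - vecMulVec a (star a))) := by
  set v : Fin d → ℂ := fun i => a i / ((c : ℂ) + (p i : ℂ)) with hv
  refine PosSemidef.of_dotProduct_mulVec_nonneg ?_ ?_
  · apply IsHermitian.add
    · rw [Matrix.IsHermitian, conjTranspose_smul, (aux_vmv_herm v).eq]
      congr 1
      rw [Complex.star_def, Complex.conj_ofReal]
    · exact (aux_diag_herm p).sub (aux_vmv_herm a)
  · intro x
    rw [add_mulVec, sub_mulVec, dotProduct_add, dotProduct_sub, smul_mulVec,
      dotProduct_smul, aux_quad_vmv, aux_quad_vmv, aux_quad_diag, smul_eq_mul]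
    have hGv : star v ⬝ᵥ x = ∑ i, ((starRingEnd ℂ) (a i) / ((c:ℂ) + (p i : ℂ))) * x i := by
      apply Finset.sum_congr rfl
      intro i _
      rw [hv]
      simp only [Pi.star_apply, Complex.star_def, map_div₀, map_add, Complex.conj_ofReal]
    have hGa : star a ⬝ᵥ x = ∑ i, (starRingEnd ℂ) (a i) * x i := by
      apply Finset.sum_congr rfl
      intro i _
      simp [Complex.star_def]
    rw [hGv, hGa]
    rw [← Complex.ofReal_mul, ← Complex.ofReal_sub, ← Complex.ofReal_add,
      Complex.zero_le_real]
    have := aux_key_ineq p hp0 c hcpos hc a x ha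
    linarith

end auxiliaryDisturbance

/-- for a single-system pure state `|ψ⟩` and a complete projective measurement
in the orthonormal basis `{|eᵢ⟩}`, `½‖|ψ⟩⟨ψ| − Π[|ψ⟩⟨ψ|]‖₁` equals the unique nonnegative
`c` with `Σᵢ pᵢ/(c + pᵢ) = 1`, where `pᵢ = |⟨eᵢ|ψ⟩|²`. -/
theorem disturbance_pure_single {d : ℕ}
    (ψ : Fin d → ℂ) (hψ : ∑ i, ‖ψ i‖^2 = 1)
    (e : Fin d → Fin d → ℂ)
    (he : ∀ i j, star (e i) ⬝ᵥ e j = if i = j then 1 else 0)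
    (p : Fin d → ℝ) (hp : ∀ i, p i = ‖star (e i) ⬝ᵥ ψ‖^2)
    (c : ℝ) (hc0 : 0 ≤ c) (hc : ∑ i, p i / (c + p i) = 1) :
    (1 / 2) * traceNorm (Matrix.vecMulVec ψ (star ψ) - projMeas e (Matrix.vecMulVec ψ (star ψ)))
      = c := by
  classical
  set ρ : Matrix (Fin d) (Fin d) ℂ := Matrix.vecMulVec ψ (star ψ) with hρ
  set a : Fin d → ℂ := fun i => star (e i) ⬝ᵥ ψ with hadef
  have ha : ∀ i, ‖a i‖ ^ 2 = p i := fun i => (hp i).symm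
  have hp0 : ∀ i, 0 ≤ p i := fun i => (hp i) ▸ sq_nonneg _
  set U : Matrix (Fin d) (Fin d) ℂ := Matrix.of (fun i j => star (e i j)) with hUdef
  have hUU' : U * Uᴴ = 1 := by
    ext i j
    simpa [hUdef, Matrix.mul_apply, Matrix.conjTranspose_apply, Matrix.one_apply,
      dotProduct] using he i j
  have hU'U : Uᴴ * U = 1 := mul_eq_one_comm.mp hUU'
  have hb : U *ᵥ ψ = a := by
    funext l
    simp [hUdef, hadef, Matrix.mulVec, dotProduct]
  have hUa : Uᴴ *ᵥ a = ψ := by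
    rw [← hb, Matrix.mulVec_mulVec, hU'U, Matrix.one_mulVec]
  have hcomp : ∀ k, ∑ l, e l k * a l = ψ k := by
    intro k
    have h2 := congrFun hUa k
    simpa [Matrix.mulVec, dotProduct, Matrix.conjTranspose_apply, hUdef] using h2
  have hstar_a_U : star a ᵥ* U = star ψ := by
    funext k
    simp only [Matrix.vecMul, dotProduct, hUdef, Matrix.of_apply, Pi.star_apply]
    calc ∑ l, star (a l) * star (e l k) = star (∑ l, e l k * a l) := by
          rw [star_sum]
          exact Finset.sum_congr rfl fun l _ => by rw [StarMul.star_mul]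
      _ = star (ψ k) := by rw [hcomp k]
  set D : Matrix (Fin d) (Fin d) ℂ := Matrix.diagonal (fun i => ((p i : ℝ) : ℂ)) with hDdef
  have hpa : ∀ i, a i * star (a i) = ((p i : ℝ) : ℂ) := by
    intro i
    have h1 : Complex.normSq (a i) = p i := by
      rw [← ha i, Complex.normSq_eq_norm_sq]
    rw [Complex.star_def, Complex.mul_conj, h1]
  have hρU : ρ = Uᴴ * Matrix.vecMulVec a (star a) * U := by
    rw [aux_mul_vmv, aux_vmv_mul, hUa, hstar_a_U]
  have hPiρPi : ∀ i, Matrix.vecMulVec (e i) (star (e i)) * ρ * Matrix.vecMulVec (e i) (star (e i))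
      = ((p i : ℝ) : ℂ) • Matrix.vecMulVec (e i) (star (e i)) := by
    intro i
    rw [hρ, aux_vmv_mul_vmv, smul_mul_assoc, aux_vmv_mul_vmv, smul_smul]
    congr 1
    rw [show star ψ ⬝ᵥ e i = star (star (e i) ⬝ᵥ ψ) from star_dotProduct ψ (e i)]
    exact hpa i
  have hproj : projMeas e ρ = Uᴴ * D * U := by
    rw [projMeas]
    rw [Finset.sum_congr rfl fun i _ => hPiρPi i]
    ext j k
    rw [Matrix.mul_apply]
    simp only [hDdef, Matrix.mul_diagonal, Matrix.conjTranspose_apply, hUdef,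
      Matrix.of_apply, star_star, Matrix.sum_apply, Matrix.smul_apply,
      Matrix.vecMulVec_apply, Pi.star_apply, smul_eq_mul]
    exact (Finset.sum_congr rfl fun l _ => by ring).symm
  rcases eq_or_lt_of_le hc0 with hczero | hcpos
  · -- case c = 0
    have hc' : ∑ i, p i / (0 + p i) = 1 := by rw [hczero]; exact hc
    have hsum : ∑ i, p i / (0 + p i) = ∑ i, if p i ≠ 0 then (1:ℝ) else 0 := by
      apply Finset.sum_congr rfl
      intro i _
      rw [zero_add]
      by_cases h : p i = 0
      · simp [h]
      · simp [h, div_self h]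
    have hone : (Finset.univ.filter (fun i => p i ≠ 0)).card = 1 := by
      rw [hsum, Finset.sum_boole] at hc'
      exact_mod_cast hc'
    obtain ⟨i₀, hi₀⟩ := Finset.card_eq_one.mp hone
    have hpzero : ∀ j, j ≠ i₀ → p j = 0 := by
      intro j hj
      by_contra hpj
      have hmem : j ∈ Finset.univ.filter (fun i => p i ≠ 0) :=
        Finset.mem_filter.mpr ⟨Finset.mem_univ _, hpj⟩
      rw [hi₀, Finset.mem_singleton] at hmem
      exact hj hmem
    have hzero : ∀ j, j ≠ i₀ → a j = 0 := by
      intro j hj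
      have h2 : ‖a j‖ ^ 2 = 0 := by rw [ha j]; exact hpzero j hj
      have h3 : ‖a j‖ = 0 := by nlinarith [norm_nonneg (a j)]
      exact norm_eq_zero.mp h3
    have hM0zero : Matrix.vecMulVec a (star a) = D := by
      ext j k
      rw [Matrix.vecMulVec_apply, hDdef, Matrix.diagonal_apply, Pi.star_apply]
      by_cases hjk : j = k
      · subst hjk
        rw [if_pos rfl]
        by_cases hj : j = i₀
        · subst hj; exact hpa _
        · rw [hzero j hj, zero_mul, hpzero j hj, Complex.ofReal_zero]
      · rw [if_neg hjk]
        by_cases hj : j = i₀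
        · have hk : k ≠ i₀ := fun h => hjk (by rw [hj, h])
          rw [hzero k hk, star_zero, mul_zero]
        · rw [hzero j hj, zero_mul]
    have hMzero : ρ - projMeas e ρ = 0 := by
      rw [hproj, hρU, hM0zero, sub_self]
    rw [hMzero, aux_traceNorm_eq_of_decomp 0 0 0 Matrix.PosSemidef.zero Matrix.PosSemidef.zero
      (by rw [sub_zero]) (by rw [mul_zero]) (by rw [mul_zero])]
    simp [← hczero]
  · -- case 0 < c
    set s : ℝ := ∑ i, p i / (c + p i) ^ 2 with hsdef
    have hspos : 0 < s := by
      have hex : ∃ i, 0 < p i := by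
        by_contra h
        push_neg at h
        have hz : ∀ i, p i = 0 := fun i => le_antisymm (h i) (hp0 i)
        have : (1:ℝ) = 0 := by rw [← hc]; simp [hz]
        norm_num at this
      obtain ⟨i₀, hi₀⟩ := hex
      exact Finset.sum_pos' (fun i _ => div_nonneg (hp0 i) (sq_nonneg _))
        ⟨i₀, Finset.mem_univ _, div_pos hi₀ (by positivity)⟩
    set v : Fin d → ℂ := fun i => a i / ((c : ℂ) + (p i : ℂ)) with hvdef
    set P₀ : Matrix (Fin d) (Fin d) ℂ := ((c / s : ℝ) : ℂ) • Matrix.vecMulVec v (star v)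
      with hP0def
    set M₀ : Matrix (Fin d) (Fin d) ℂ := Matrix.vecMulVec a (star a) - D with hM0def
    have hcp_ne : ∀ i, ((c:ℂ) + (p i : ℂ)) ≠ 0 := by
      intro i
      rw [← Complex.ofReal_add]
      exact_mod_cast (show c + p i ≠ 0 by have := hp0 i; positivity)
    have hcpR_ne : ∀ i, c + p i ≠ 0 := fun i => by have := hp0 i; positivity
    have hN0psd : (P₀ - M₀).PosSemidef := by
      have h := aux_N0_psd p hp0 c hcpos hc a ha
      have heq : ((c / (∑ i, p i / (c + p i) ^ 2) : ℝ) : ℂ) •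
          Matrix.vecMulVec (fun i => a i / ((c : ℂ) + (p i : ℂ)))
            (star fun i => a i / ((c : ℂ) + (p i : ℂ)))
          + (Matrix.diagonal (fun i => (p i : ℂ)) - Matrix.vecMulVec a (star a))
          = P₀ - M₀ := by
        rw [hP0def, hM0def, hvdef, hsdef, hDdef]
        abel
      rwa [heq] at h
    have hsvv : star v ⬝ᵥ v = ((s : ℝ) : ℂ) := by
      have : ∀ i, star (v i) * v i = ((p i / (c + p i) ^ 2 : ℝ) : ℂ) := by
        intro i
        rw [hvdef]
        simp only [Complex.star_def, map_div₀, map_add, Complex.conj_ofReal]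
        rw [div_mul_div_comm, ← Complex.normSq_eq_conj_mul_self, Complex.normSq_eq_norm_sq,
          ha i]
        push_cast
        rw [← Complex.ofReal_add]
        norm_cast
        ring
      rw [dotProduct]
      simp only [Pi.star_apply]
      rw [Finset.sum_congr rfl fun i _ => this i, hsdef]
      push_cast
      rfl
    have hsva : star v ⬝ᵥ a = 1 := by
      have : ∀ i, star (v i) * a i = ((p i / (c + p i) : ℝ) : ℂ) := by
        intro i
        rw [hvdef]
        simp only [Complex.star_def, map_div₀, map_add, Complex.conj_ofReal]
        rw [div_mul_eq_mul_div, ← Complex.normSq_eq_conj_mul_self, Complex.normSq_eq_norm_sq,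
          ha i]
        push_cast
        rfl
      rw [dotProduct]
      simp only [Pi.star_apply]
      rw [Finset.sum_congr rfl fun i _ => this i]
      rw [← Complex.ofReal_sum, hc, Complex.ofReal_one]
    have hP0sq : P₀ * P₀ = ((c : ℝ) : ℂ) • P₀ := by
      rw [hP0def, smul_mul_assoc, mul_smul_comm, aux_vmv_mul_vmv, hsvv, smul_smul, smul_smul,
        smul_smul]
      congr 1
      rw [← Complex.ofReal_mul, ← Complex.ofReal_mul, ← Complex.ofReal_mul]
      congr 1
      field_simp
    have hP0M0 : P₀ * M₀ = ((c : ℝ) : ℂ) • P₀ := by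
      rw [hM0def, hP0def, smul_mul_assoc, mul_sub, aux_vmv_mul_vmv, hsva, one_smul, hDdef,
        aux_vmv_mul, ← aux_vmv_sub]
      have harg : star a - (star v ᵥ* Matrix.diagonal (fun i => ((p i : ℝ) : ℂ)))
          = ((c : ℝ) : ℂ) • star v := by
        funext k
        simp only [Pi.sub_apply, Matrix.vecMul_diagonal, Pi.smul_apply, smul_eq_mul,
          Pi.star_apply, hvdef]
        simp only [Complex.star_def, map_div₀, map_add, Complex.conj_ofReal]
        field_simp [hcp_ne k, show ((p k : ℂ) + (c : ℂ)) ≠ 0 from by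
          rw [add_comm]; exact hcp_ne k]
        ring
      rw [harg, aux_vmv_smul_right, smul_smul, smul_smul]
      congr 1
      ring
    have hP0N0 : P₀ * (P₀ - M₀) = 0 := by
      rw [mul_sub, hP0sq, hP0M0, sub_self]
    have hP0psd : P₀.PosSemidef := by
      refine Matrix.PosSemidef.of_dotProduct_mulVec_nonneg ?_ ?_
      · rw [hP0def, Matrix.IsHermitian, Matrix.conjTranspose_smul, (aux_vmv_herm v).eq]
        congr 1
        rw [Complex.star_def, Complex.conj_ofReal]
      · intro x
        rw [hP0def, Matrix.smul_mulVec, dotProduct_smul, aux_quad_vmv, smul_eq_mul,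
          ← Complex.ofReal_mul, Complex.zero_le_real]
        exact mul_nonneg (div_nonneg hc0 hspos.le) (sq_nonneg _)
    have hN0P0 : (P₀ - M₀) * P₀ = 0 := by
      have h := congrArg Matrix.conjTranspose hP0N0
      rwa [Matrix.conjTranspose_mul, hN0psd.1, hP0psd.1, Matrix.conjTranspose_zero] at h
    have hPpsd : (Uᴴ * P₀ * U).PosSemidef := hP0psd.conjTranspose_mul_mul_same U
    have hNpsd : (Uᴴ * (P₀ - M₀) * U).PosSemidef := hN0psd.conjTranspose_mul_mul_same U
    have hsub : ∀ A B : Matrix (Fin d) (Fin d) ℂ,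
        Uᴴ * A * U - Uᴴ * B * U = Uᴴ * (A - B) * U := by
      intro A B
      rw [Matrix.mul_sub, Matrix.sub_mul]
    have hMdecomp : ρ - projMeas e ρ = (Uᴴ * P₀ * U) - (Uᴴ * (P₀ - M₀) * U) := by
      rw [hproj, hρU, hsub, hsub]
      congr 1
      rw [hM0def]
      abel
    have hPN : (Uᴴ * P₀ * U) * (Uᴴ * (P₀ - M₀) * U) = 0 := by
      calc (Uᴴ * P₀ * U) * (Uᴴ * (P₀ - M₀) * U)
          = Uᴴ * (P₀ * ((U * Uᴴ) * ((P₀ - M₀) * U))) := by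
            simp only [Matrix.mul_assoc]
        _ = Uᴴ * ((P₀ * (P₀ - M₀)) * U) := by rw [hUU', Matrix.one_mul, Matrix.mul_assoc]
        _ = 0 := by rw [hP0N0, Matrix.zero_mul, Matrix.mul_zero]
    have hNP : (Uᴴ * (P₀ - M₀) * U) * (Uᴴ * P₀ * U) = 0 := by
      calc (Uᴴ * (P₀ - M₀) * U) * (Uᴴ * P₀ * U)
          = Uᴴ * ((P₀ - M₀) * ((U * Uᴴ) * (P₀ * U))) := by
            simp only [Matrix.mul_assoc]
        _ = Uᴴ * (((P₀ - M₀) * P₀) * U) := by rw [hUU', Matrix.one_mul, Matrix.mul_assoc]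
        _ = 0 := by rw [hN0P0, Matrix.zero_mul, Matrix.mul_zero]
    have htrconj : ∀ A : Matrix (Fin d) (Fin d) ℂ, (Uᴴ * A * U).trace = A.trace := by
      intro A
      rw [Matrix.trace_mul_cycle, hUU', Matrix.one_mul]
    have htrvmv : ∀ u : Fin d → ℂ, (Matrix.vecMulVec u (star u)).trace = star u ⬝ᵥ u := by
      intro u
      rw [Matrix.trace, dotProduct]
      apply Finset.sum_congr rfl
      intro i _
      rw [Matrix.diag_apply, Matrix.vecMulVec_apply, Pi.star_apply, mul_comm]
    have htrP : (Uᴴ * P₀ * U).trace = ((c : ℝ) : ℂ) := by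
      rw [htrconj, hP0def, Matrix.trace_smul, htrvmv, hsvv, smul_eq_mul,
        ← Complex.ofReal_mul]
      congr 1
      field_simp
    have htrN : (Uᴴ * (P₀ - M₀) * U).trace = ((c : ℝ) : ℂ) := by
      rw [htrconj, Matrix.trace_sub, hM0def, Matrix.trace_sub, htrvmv]
      have h1 : star a ⬝ᵥ a = D.trace := by
        rw [hDdef, Matrix.trace_diagonal, dotProduct]
        apply Finset.sum_congr rfl
        intro i _
        rw [Pi.star_apply, mul_comm]
        exact hpa i
      rw [h1]
      have htrP0 : P₀.trace = ((c : ℝ) : ℂ) := by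
        rw [hP0def, Matrix.trace_smul, htrvmv, hsvv, smul_eq_mul, ← Complex.ofReal_mul]
        congr 1
        field_simp
      rw [htrP0]
      ring
    rw [hMdecomp, aux_traceNorm_eq_of_decomp _ _ _ hPpsd hNpsd rfl hPN hNP, htrP, htrN]
    simp only [Complex.add_re, Complex.ofReal_re]
    ring
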